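/- Invertibility for non-cut outages (Theorem 4, part 2, invertibility claim): If F ⊊ E is a non-cut set of edges of the connected graph G, then the |F|×|F| matrix I − D_{FF} = I − B_F·C_F^T·A·C_F is invertible, where B_F and C_F are the submatrices of diag(B) and C corresponding to the edges in F. -/

import Mathlib

open Matrix Finset

variable {n m : ℕ}

/-- Nodes `a` and `b` are joined by some edge in the edge set `S`. -/
def edgeAdj (src tgt : Fin m → Fin (n + 1)) (S : Finset (Fin m)) (a b : Fin (n + 1)) : Prop :=
  ∃ e ∈ S, (src e = a ∧ tgt e = b) ∨ (src e = b ∧ tgt e = a)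

/-- The spanning subgraph with edge set `S` is connected. -/
def ConnectedOn (src tgt : Fin m → Fin (n + 1)) (S : Finset (Fin m)) : Prop :=
  ∀ a b : Fin (n + 1), Relation.ReflTransGen (edgeAdj src tgt S) a b

/-- `F` is the edge set of a spanning tree of the graph on `n + 1` nodes
(a connected spanning subgraph with exactly `n` edges). -/
def IsSpanningTree (src tgt : Fin m → Fin (n + 1)) (F : Finset (Fin m)) : Prop :=
  F.card = n ∧ ConnectedOn src tgt F

/-- Connectivity within the vertex set `V`, using only edges of `S` traversed inside `V`. -/
def ConnWithin (src tgt : Fin m → Fin (n + 1)) (S : Finset (Fin m))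
    (V : Finset (Fin (n + 1))) : Prop :=
  ∀ a ∈ V, ∀ b ∈ V,
    Relation.ReflTransGen (fun x y => x ∈ V ∧ y ∈ V ∧ edgeAdj src tgt S x y) a b

/-- `F` is a spanning forest of exactly two vertex-disjoint trees, one containing all
nodes in `N1` and the other containing all nodes in `N2`. -/
def IsSpanningForest2 (src tgt : Fin m → Fin (n + 1)) (F : Finset (Fin m))
    (N1 N2 : Finset (Fin (n + 1))) : Prop :=
  ∃ V1 V2 : Finset (Fin (n + 1)),
    Disjoint V1 V2 ∧ V1 ∪ V2 = Finset.univ ∧ V1.Nonempty ∧ V2.Nonempty ∧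
      N1 ⊆ V1 ∧ N2 ⊆ V2 ∧ F.card + 1 = n ∧
      (∀ e ∈ F, (src e ∈ V1 ∧ tgt e ∈ V1) ∨ (src e ∈ V2 ∧ tgt e ∈ V2)) ∧
      ConnWithin src tgt F V1 ∧ ConnWithin src tgt F V2

/-- The (signed) incidence matrix `C`. -/
def incMat (src tgt : Fin m → Fin (n + 1)) : Matrix (Fin (n + 1)) (Fin m) ℝ :=
  Matrix.of fun i e => if src e = i then 1 else if tgt e = i then -1 else 0

/-- The weighted Laplacian `L = C ⬝ diag B ⬝ Cᵀ`. -/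
noncomputable def lap (src tgt : Fin m → Fin (n + 1)) (B : Fin m → ℝ) :
    Matrix (Fin (n + 1)) (Fin (n + 1)) ℝ :=
  incMat src tgt * Matrix.diagonal B * (incMat src tgt)ᵀ

/-- The reduced Laplacian: delete the row and column of the reference node `Fin.last n`. -/
noncomputable def rlap (src tgt : Fin m → Fin (n + 1)) (B : Fin m → ℝ) :
    Matrix (Fin n) (Fin n) ℝ :=
  (lap src tgt B).submatrix Fin.castSucc Fin.castSucc

/-- The inverse of the reduced Laplacian, padded with a zero row and column at the
reference node. -/
noncomputable def Amat (src tgt : Fin m → Fin (n + 1)) (B : Fin m → ℝ) :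
    Matrix (Fin (n + 1)) (Fin (n + 1)) ℝ :=
  Matrix.of fun i j =>
    if hi : i = Fin.last n then 0
    else if hj : j = Fin.last n then 0
    else (rlap src tgt B)⁻¹ (i.castPred hi) (j.castPred hj)

open Classical in
/-- `Σ_{F ∈ T_E} β(F)`: total weight of all spanning trees. -/
noncomputable def treeSum (src tgt : Fin m → Fin (n + 1)) (B : Fin m → ℝ) : ℝ :=
  ∑ F ∈ Finset.univ.filter (fun F => IsSpanningTree src tgt F), ∏ e ∈ F, B e

open Classical in
/-- `Σ_{F ∈ T_{−l}} β(F)`: total weight of all spanning trees avoiding the edge `l`. -/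
noncomputable def treeSumAvoiding (src tgt : Fin m → Fin (n + 1)) (B : Fin m → ℝ)
    (l : Fin m) : ℝ :=
  ∑ F ∈ Finset.univ.filter (fun F => IsSpanningTree src tgt F ∧ l ∉ F), ∏ e ∈ F, B e

open Classical in
/-- `Σ_{F ∈ T(N1, N2)} β(F)`: total weight of two-tree spanning forests separating
`N1` from `N2`. -/
noncomputable def forestSum (src tgt : Fin m → Fin (n + 1)) (B : Fin m → ℝ)
    (N1 N2 : Finset (Fin (n + 1))) : ℝ :=
  ∑ F ∈ Finset.univ.filter (fun F => IsSpanningForest2 src tgt F N1 N2), ∏ e ∈ F, B e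

/-- The power transfer distribution factor `D_{l, î ĵ}`. -/
noncomputable def ptdf (src tgt : Fin m → Fin (n + 1)) (B : Fin m → ℝ) (l : Fin m)
    (ihat jhat : Fin (n + 1)) : ℝ :=
  B l * (Amat src tgt B (src l) ihat + Amat src tgt B (tgt l) jhat
    - Amat src tgt B (src l) jhat - Amat src tgt B (tgt l) ihat)

/-- An edge is a bridge if its removal disconnects the graph. -/
def IsBridge (src tgt : Fin m → Fin (n + 1)) (l : Fin m) : Prop :=
  ¬ ConnectedOn src tgt (Finset.univ.erase l)

/-- There is a simple cycle (distinct edges, distinct vertices) containing both edges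
`l` and `lhat`. -/
def ExistsSimpleCycleThrough (src tgt : Fin m → Fin (n + 1)) (l lhat : Fin m) : Prop :=
  ∃ (k : ℕ) (es : Fin (k + 2) → Fin m) (vs : Fin (k + 2) → Fin (n + 1)),
    Function.Injective es ∧ Function.Injective vs ∧
      (∀ t, (src (es t) = vs t ∧ tgt (es t) = vs (t + 1)) ∨
        (src (es t) = vs (t + 1) ∧ tgt (es t) = vs t)) ∧
      (∃ t, es t = l) ∧ (∃ t, es t = lhat)

/-- The incidence submatrix `C_{−F}` on the surviving edges. -/
def Cminus (src tgt : Fin m → Fin (n + 1)) (F : Finset (Fin m)) :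
    Matrix (Fin (n + 1)) {e : Fin m // e ∉ F} ℝ :=
  (incMat src tgt).submatrix id (fun e => e.val)

/-- The incidence submatrix `C_F` on the removed edges. -/
def Cof (src tgt : Fin m → Fin (n + 1)) (F : Finset (Fin m)) :
    Matrix (Fin (n + 1)) {e : Fin m // e ∈ F} ℝ :=
  (incMat src tgt).submatrix id (fun e => e.val)

/-- The diagonal susceptance submatrix `B_{−F}` on the surviving edges. -/
noncomputable def Bminus (B : Fin m → ℝ) (F : Finset (Fin m)) :
    Matrix {e : Fin m // e ∉ F} {e : Fin m // e ∉ F} ℝ :=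
  Matrix.diagonal fun e => B e.val

/-- The diagonal susceptance submatrix `B_F` on the removed edges. -/
noncomputable def Bof (B : Fin m → ℝ) (F : Finset (Fin m)) :
    Matrix {e : Fin m // e ∈ F} {e : Fin m // e ∈ F} ℝ :=
  Matrix.diagonal fun e => B e.val

/-- The post-contingency Laplacian `L_{−F} = C_{−F} ⬝ B_{−F} ⬝ C_{−F}ᵀ`. -/
noncomputable def lapMinus (src tgt : Fin m → Fin (n + 1)) (B : Fin m → ℝ)
    (F : Finset (Fin m)) : Matrix (Fin (n + 1)) (Fin (n + 1)) ℝ :=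
  Cminus src tgt F * Bminus B F * (Cminus src tgt F)ᵀ

/-- The padded inverse `A_{−F}` of the post-contingency reduced Laplacian. -/
noncomputable def AmatMinus (src tgt : Fin m → Fin (n + 1)) (B : Fin m → ℝ)
    (F : Finset (Fin m)) : Matrix (Fin (n + 1)) (Fin (n + 1)) ℝ :=
  Matrix.of fun i j =>
    if hi : i = Fin.last n then 0
    else if hj : j = Fin.last n then 0
    else ((lapMinus src tgt B F).submatrix Fin.castSucc Fin.castSucc)⁻¹
      (i.castPred hi) (j.castPred hj)

/-- The pre-contingency branch flow vector `f = diag(B) ⬝ Cᵀ ⬝ A ⬝ p`. -/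
noncomputable def flowPre (src tgt : Fin m → Fin (n + 1)) (B : Fin m → ℝ)
    (p : Fin (n + 1) → ℝ) : Fin m → ℝ :=
  (Matrix.diagonal B * (incMat src tgt)ᵀ * Amat src tgt B) *ᵥ p

/-- The post-contingency branch flow vector `f̃_{−F} = B_{−F} ⬝ C_{−F}ᵀ ⬝ A_{−F} ⬝ p`
on the surviving edges. -/
noncomputable def flowPost (src tgt : Fin m → Fin (n + 1)) (B : Fin m → ℝ)
    (F : Finset (Fin m)) (p : Fin (n + 1) → ℝ) : {e : Fin m // e ∉ F} → ℝ :=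
  (Bminus B F * (Cminus src tgt F)ᵀ * AmatMinus src tgt B F) *ᵥ p

/-- The generalized line outage distribution factor matrix
`K^F = B_{−F} ⬝ C_{−F}ᵀ ⬝ A_{−F} ⬝ C_F`. -/
noncomputable def glodf (src tgt : Fin m → Fin (n + 1)) (B : Fin m → ℝ)
    (F : Finset (Fin m)) : Matrix {e : Fin m // e ∉ F} {e : Fin m // e ∈ F} ℝ :=
  Bminus B F * (Cminus src tgt F)ᵀ * AmatMinus src tgt B F * Cof src tgt F

/-- The PTDF submatrix `D_{FF} = B_F ⬝ C_Fᵀ ⬝ A ⬝ C_F`. -/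
noncomputable def Dff (src tgt : Fin m → Fin (n + 1)) (B : Fin m → ℝ)
    (F : Finset (Fin m)) : Matrix {e : Fin m // e ∈ F} {e : Fin m // e ∈ F} ℝ :=
  Bof B F * (Cof src tgt F)ᵀ * Amat src tgt B * Cof src tgt F

/-- The PTDF submatrix `D_{−FF} = B_{−F} ⬝ C_{−F}ᵀ ⬝ A ⬝ C_F`. -/
noncomputable def DmFF (src tgt : Fin m → Fin (n + 1)) (B : Fin m → ℝ)
    (F : Finset (Fin m)) : Matrix {e : Fin m // e ∉ F} {e : Fin m // e ∈ F} ℝ :=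
  Bminus B F * (Cminus src tgt F)ᵀ * Amat src tgt B * Cof src tgt F


section InvertAux

open Matrix Finset

private lemma key_triple {N : ℕ} {κ : Type*} [Fintype κ] [DecidableEq κ]
    (M : Matrix (Fin N) κ ℝ) (d : κ → ℝ) (i j : Fin N) :
    (M * Matrix.diagonal d * Mᵀ) i j = ∑ e, M i e * d e * M j e := by
  simp only [Matrix.mul_apply, Matrix.transpose_apply, Matrix.diagonal_apply, mul_ite,
    mul_zero, Finset.sum_ite_eq, Finset.sum_ite_eq', Finset.mem_univ, if_true]

/-- Generic reduced-Laplacian invertibility. -/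
private lemma aux_lap_unit {n : ℕ} {ι : Type*} [Fintype ι] [DecidableEq ι]
    (s t : ι → Fin (n+1)) (b : ι → ℝ)
    (hb : ∀ e, 0 < b e) (hst : ∀ e, s e ≠ t e)
    (hconn : ∀ x y : Fin (n+1), Relation.ReflTransGen
      (fun x y => ∃ e, (s e = x ∧ t e = y) ∨ (s e = y ∧ t e = x)) x y) :
    IsUnit ((((Matrix.of fun i e => if s e = i then (1:ℝ) else if t e = i then -1 else 0) *
      Matrix.diagonal b *
      (Matrix.of fun i e => if s e = i then (1:ℝ) else if t e = i then -1 else 0)ᵀ).submatrix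
      Fin.castSucc Fin.castSucc)) := by
  classical
  set C : Matrix (Fin (n+1)) ι ℝ :=
    Matrix.of fun i e => if s e = i then (1:ℝ) else if t e = i then -1 else 0 with hC
  set L : Matrix (Fin (n+1)) (Fin (n+1)) ℝ := C * Matrix.diagonal b * Cᵀ with hL
  set M : Matrix (Fin n) (Fin n) ℝ := L.submatrix Fin.castSucc Fin.castSucc with hM
  rw [Matrix.isUnit_iff_isUnit_det, isUnit_iff_ne_zero]
  intro hdet
  obtain ⟨v, hv0, hv⟩ := Matrix.exists_mulVec_eq_zero_iff.mpr hdet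
  set x : Fin (n+1) → ℝ := Fin.snoc v 0 with hx
  have hxlast : x (Fin.last n) = 0 := Fin.snoc_last _ _
  have hxcs : ∀ i : Fin n, x (Fin.castSucc i) = v i := fun i => Fin.snoc_castSucc _ _ _
  have hCt : ∀ e, (Cᵀ *ᵥ x) e = x (s e) - x (t e) := by
    intro e
    have : ∀ i, Cᵀ e i * x i =
        (if s e = i then x i else 0) - (if t e = i then x i else 0) := by
      intro i
      simp only [hC, Matrix.transpose_apply, Matrix.of_apply]
      split_ifs with h1 h2 h2
      · exact absurd (h1.trans h2.symm) (hst e)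
      · ring
      · ring
      · ring
    simp only [Matrix.mulVec, dotProduct, this, Finset.sum_sub_distrib,
      Finset.sum_ite_eq, Finset.mem_univ, if_true]
  have hLx : ∀ i : Fin n, (L *ᵥ x) (Fin.castSucc i) = (M *ᵥ v) i := by
    intro i
    simp only [Matrix.mulVec, dotProduct, hM, Matrix.submatrix_apply]
    rw [Fin.sum_univ_castSucc]
    simp [hxlast, hxcs]
  have hen : x ⬝ᵥ (L *ᵥ x) = ∑ e, b e * (x (s e) - x (t e))^2 := by
    rw [hL, Matrix.mul_assoc, ← Matrix.mulVec_mulVec, Matrix.dotProduct_mulVec]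
    rw [show x ᵥ* C = Cᵀ *ᵥ x by rw [← Matrix.transpose_transpose C, Matrix.vecMul_transpose,
      Matrix.transpose_transpose]]
    rw [← Matrix.mulVec_mulVec]
    simp only [dotProduct]
    refine Finset.sum_congr rfl fun e _ => ?_
    rw [Matrix.mulVec_diagonal, hCt]
    ring
  have hzero : x ⬝ᵥ (L *ᵥ x) = 0 := by
    rw [dotProduct]
    rw [Fin.sum_univ_castSucc]
    simp only [hxlast, hxcs, hLx, zero_mul, add_zero]
    rw [show ∑ i : Fin n, v i * (M *ᵥ v) i = v ⬝ᵥ (M *ᵥ v) from rfl, hv,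
      dotProduct_zero]
  have hterm : ∀ e, x (s e) - x (t e) = 0 := by
    have hnn : ∀ e ∈ (Finset.univ : Finset ι), 0 ≤ b e * (x (s e) - x (t e))^2 :=
      fun e _ => mul_nonneg (hb e).le (sq_nonneg _)
    have hall := (Finset.sum_eq_zero_iff_of_nonneg hnn).mp (hen ▸ hzero)
    intro e
    have := hall e (Finset.mem_univ e)
    have hb' := (hb e).ne'
    have := (mul_eq_zero.mp this).resolve_left hb'
    exact pow_eq_zero_iff (by norm_num) |>.mp this
  have hstep : ∀ a c : Fin (n+1), (∃ e, (s e = a ∧ t e = c) ∨ (s e = c ∧ t e = a)) →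
      x a = x c := by
    rintro a c ⟨e, (⟨h1, h2⟩ | ⟨h1, h2⟩)⟩
    · have := hterm e; rw [h1, h2] at this; linarith
    · have := hterm e; rw [h1, h2] at this; linarith
  have hconst : ∀ y, x y = 0 := by
    intro y
    have h := hconn (Fin.last n) y
    induction h with
    | refl => exact hxlast
    | tail _ h ih => rw [← hstep _ _ h]; exact ih
  apply hv0
  funext i
  have := hconst (Fin.castSucc i)
  rw [hxcs] at this
  simpa using this

private lemma pad_sandwich {n : ℕ} {α β : Type*} [Fintype α] [Fintype β]
    (P : Matrix (Fin (n+1)) α ℝ) (Q : Matrix (Fin (n+1)) β ℝ)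
    (X : Matrix (Fin n) (Fin n) ℝ) :
    Pᵀ * (Matrix.of fun i j => if hi : i = Fin.last n then 0 else if hj : j = Fin.last n then 0
      else X (i.castPred hi) (j.castPred hj)) * Q
    = (P.submatrix Fin.castSucc id)ᵀ * X * (Q.submatrix Fin.castSucc id) := by
  ext e f
  simp only [Matrix.mul_apply, Matrix.transpose_apply, Matrix.submatrix_apply, Matrix.of_apply,
    id_eq]
  rw [Fin.sum_univ_castSucc]
  simp only [dif_pos trivial, dite_eq_ite, ite_self, mul_zero, Finset.sum_const_zero,
    zero_mul, add_zero]
  refine Finset.sum_congr rfl fun j _ => ?_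
  have h1 : (Fin.castSucc j : Fin (n+1)) ≠ Fin.last n := (Fin.castSucc_lt_last j).ne
  have hin : (∑ i : Fin (n+1), P i e *
      if hi : i = Fin.last n then 0 else if hj : Fin.castSucc j = Fin.last n then 0
        else X (i.castPred hi) ((Fin.castSucc j).castPred hj))
      = ∑ i : Fin n, P (Fin.castSucc i) e * X i j := by
    rw [Fin.sum_univ_castSucc]
    rw [dif_pos rfl, mul_zero, add_zero]
    refine Finset.sum_congr rfl fun i _ => ?_
    have h2 : (Fin.castSucc i : Fin (n+1)) ≠ Fin.last n := (Fin.castSucc_lt_last i).ne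
    rw [dif_neg h2, dif_neg h1, Fin.castPred_castSucc, Fin.castPred_castSucc]
  rw [hin]

end InvertAux

/-- **Invertibility for non-cut outages, Theorem 4 part 2.**
If `F` is a non-cut set of edges of a connected graph, then the matrix
`I − D_{FF} = I − B_F C_Fᵀ A C_F` is invertible. -/
theorem non_cut_invertibility
    (src tgt : Fin m → Fin (n + 1)) (B : Fin m → ℝ)
    (hB : ∀ e, 0 < B e)
    (hsimple : ∀ e, src e ≠ tgt e)
    (hconn : ConnectedOn src tgt Finset.univ)
    (F : Finset (Fin m)) (hF : F ⊂ Finset.univ)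
    (hnc : ConnectedOn src tgt (Finset.univ \ F)) :
    IsUnit (1 - Dff src tgt B F) := by
  classical
  -- invertibility of the reduced Laplacian
  have hLb : IsUnit (rlap src tgt B) := by
    have h := aux_lap_unit src tgt B hB hsimple (fun a c => Relation.ReflTransGen.mono (r := edgeAdj src tgt Finset.univ)
      (fun x y hxy => by obtain ⟨e, _, h⟩ := hxy; exact ⟨e, h⟩) a c (hconn a c))
    exact h
  -- invertibility of the reduced post-contingency Laplacian
  have hLm : IsUnit ((lapMinus src tgt B F).submatrix Fin.castSucc Fin.castSucc) := by
    have h := aux_lap_unit (fun e : {e : Fin m // e ∉ F} => src e.val)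
      (fun e => tgt e.val) (fun e => B e.val) (fun e => hB e.val) (fun e => hsimple e.val)
      (fun a c => Relation.ReflTransGen.mono (r := edgeAdj src tgt (Finset.univ \ F)) (fun x y hxy => by
        obtain ⟨e, he, h⟩ := hxy
        exact ⟨⟨e, (Finset.mem_sdiff.mp he).2⟩, h⟩) a c (hnc a c))
    exact h
  have hLbd : IsUnit (rlap src tgt B).det := (Matrix.isUnit_iff_isUnit_det _).mp hLb
  have hLmd : IsUnit ((lapMinus src tgt B F).submatrix Fin.castSucc Fin.castSucc).det :=
    (Matrix.isUnit_iff_isUnit_det _).mp hLm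
  -- sandwich identity for the padded inverse
  have hA : (Cof src tgt F)ᵀ * Amat src tgt B * Cof src tgt F
      = ((Cof src tgt F).submatrix Fin.castSucc id)ᵀ * (rlap src tgt B)⁻¹ *
        ((Cof src tgt F).submatrix Fin.castSucc id) :=
    pad_sandwich _ _ _
  -- the Laplacian splits as surviving part plus outaged part
  have hsplit : lap src tgt B
      = lapMinus src tgt B F + Cof src tgt F * Bof B F * (Cof src tgt F)ᵀ := by
    ext i j
    have h1 := key_triple (incMat src tgt) B i j
    have h2 : lapMinus src tgt B F i j = ∑ e : {e : Fin m // e ∉ F},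
        incMat src tgt i e.val * B e.val * incMat src tgt j e.val :=
      key_triple (Cminus src tgt F) (fun e => B e.val) i j
    have h3 : (Cof src tgt F * Bof B F * (Cof src tgt F)ᵀ) i j = ∑ e : {e : Fin m // e ∈ F},
        incMat src tgt i e.val * B e.val * incMat src tgt j e.val :=
      key_triple (Cof src tgt F) (fun e => B e.val) i j
    show (incMat src tgt * Matrix.diagonal B * (incMat src tgt)ᵀ) i j = _
    rw [Matrix.add_apply, h1, h2, h3,
      ← Finset.sum_subtype F (fun x => Iff.rfl)
        (fun e => incMat src tgt i e * B e * incMat src tgt j e),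
      ← Finset.sum_subtype Fᶜ (fun x => Finset.mem_compl)
        (fun e => incMat src tgt i e * B e * incMat src tgt j e),
      add_comm, Finset.sum_add_sum_compl]
  -- reduced version of the splitting
  have hsubCB : (Cof src tgt F * Bof B F * (Cof src tgt F)ᵀ).submatrix
      Fin.castSucc Fin.castSucc
      = ((Cof src tgt F).submatrix Fin.castSucc id) * Bof B F *
        ((Cof src tgt F).submatrix Fin.castSucc id)ᵀ := by
    ext i j
    rw [Matrix.submatrix_apply]
    have h3 := key_triple (Cof src tgt F) (fun e => B e.val)
      (Fin.castSucc i) (Fin.castSucc j)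
    have h4 : (((Cof src tgt F).submatrix Fin.castSucc id) * Bof B F *
        ((Cof src tgt F).submatrix Fin.castSucc id)ᵀ) i j = ∑ e : {e : Fin m // e ∈ F},
        Cof src tgt F (Fin.castSucc i) e * B e.val * Cof src tgt F (Fin.castSucc j) e :=
      key_triple ((Cof src tgt F).submatrix Fin.castSucc id) (fun e => B e.val) i j
    exact h3.trans h4.symm
  have hsplitR : rlap src tgt B
      = (lapMinus src tgt B F).submatrix Fin.castSucc Fin.castSucc +
        ((Cof src tgt F).submatrix Fin.castSucc id) * Bof B F *
        ((Cof src tgt F).submatrix Fin.castSucc id)ᵀ := by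
    show (lap src tgt B).submatrix Fin.castSucc Fin.castSucc = _
    have hadd : (lap src tgt B).submatrix Fin.castSucc Fin.castSucc
        = (lapMinus src tgt B F).submatrix Fin.castSucc Fin.castSucc +
          (Cof src tgt F * Bof B F * (Cof src tgt F)ᵀ).submatrix Fin.castSucc Fin.castSucc := by
      rw [hsplit]; ext i j
      simp [Matrix.submatrix_apply, Matrix.add_apply]
    rw [hadd, hsubCB]
  have hLmeq : (lapMinus src tgt B F).submatrix Fin.castSucc Fin.castSucc
      = rlap src tgt B - ((Cof src tgt F).submatrix Fin.castSucc id) * Bof B F *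
        ((Cof src tgt F).submatrix Fin.castSucc id)ᵀ :=
    eq_sub_of_add_eq hsplitR.symm
  -- rewrite Dff
  have hDff : Dff src tgt B F
      = (Bof B F * ((Cof src tgt F).submatrix Fin.castSucc id)ᵀ) *
        ((rlap src tgt B)⁻¹ * ((Cof src tgt F).submatrix Fin.castSucc id)) := by
    show Bof B F * (Cof src tgt F)ᵀ * Amat src tgt B * Cof src tgt F = _
    calc Bof B F * (Cof src tgt F)ᵀ * Amat src tgt B * Cof src tgt F
        = Bof B F * ((Cof src tgt F)ᵀ * Amat src tgt B * Cof src tgt F) := by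
          simp only [Matrix.mul_assoc]
      _ = Bof B F * (((Cof src tgt F).submatrix Fin.castSucc id)ᵀ * (rlap src tgt B)⁻¹ *
            ((Cof src tgt F).submatrix Fin.castSucc id)) := by rw [hA]
      _ = _ := by simp only [Matrix.mul_assoc]
  -- determinant computation
  rw [Matrix.isUnit_iff_isUnit_det]
  have hdet : (1 - Dff src tgt B F).det
      = ((rlap src tgt B)⁻¹).det *
        ((lapMinus src tgt B F).submatrix Fin.castSucc Fin.castSucc).det := by
    calc (1 - Dff src tgt B F).det
        = (1 + (Bof B F * ((Cof src tgt F).submatrix Fin.castSucc id)ᵀ) *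
            (-((rlap src tgt B)⁻¹ * ((Cof src tgt F).submatrix Fin.castSucc id)))).det := by
          rw [hDff, Matrix.mul_neg, ← sub_eq_add_neg]
      _ = (1 + (-((rlap src tgt B)⁻¹ * ((Cof src tgt F).submatrix Fin.castSucc id))) *
            (Bof B F * ((Cof src tgt F).submatrix Fin.castSucc id)ᵀ)).det :=
          Matrix.det_one_add_mul_comm _ _
      _ = ((rlap src tgt B)⁻¹ *
            ((lapMinus src tgt B F).submatrix Fin.castSucc Fin.castSucc)).det := by
          congr 1
          rw [Matrix.neg_mul, ← sub_eq_add_neg, hLmeq, Matrix.mul_sub,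
            Matrix.nonsing_inv_mul _ hLbd]
          simp only [Matrix.mul_assoc]
      _ = _ := Matrix.det_mul _ _
  rw [hdet, Matrix.det_nonsing_inv]
  exact (isUnit_ringInverse.mpr hLbd).mul hLmd
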